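/- Let Ũ : (0,∞) → ℝ be nonincreasing and convex, bounded below, satisfying Ũ(y) ≤ C(1 + y^q) for all y > 0 for some C > 0 and q < 0. Fix τ > 0 and define v(y) = (2√(πτ))^{-1} ∫_{-∞}^{∞} e^{-x²/(4τ)} Ũ(y e^{x−τ}) dx for y > 0. Then v is differentiable on (0,∞) with v'(y) = (2√(πτ))^{-1} ∫_{-∞}^{∞} e^{-(x−2τ)²/(4τ)} D⁺Ũ(y e^{x−τ}) dx, where D⁺Ũ denotes the right derivative of Ũ (which exists everywhere by convexity), and lim_{y→0⁺} v'(y) = lim_{y→0⁺} D⁺Ũ(y), the limits taken in [−∞, 0]. -/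

import Mathlib

open Real Set Filter MeasureTheory


section gauss
variable {τ : ℝ}

lemma integrable_gauss (hτ : 0 < τ) (c : ℝ) :
    Integrable (fun x : ℝ => Real.exp (-x ^ 2 / (4 * τ) + c * x)) := by
  have h1 : Integrable (fun x : ℝ => Real.exp (-(1 / (4 * τ)) * x ^ 2)) :=
    integrable_exp_neg_mul_sq (by positivity)
  have h2 := (h1.comp_sub_right (2 * τ * c)).const_mul (Real.exp (τ * c ^ 2))
  refine h2.congr (Eventually.of_forall fun x => ?_)
  show Real.exp _ * Real.exp _ = _
  rw [← Real.exp_add]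
  congr 1
  field_simp
  ring

lemma integral_gauss_shift (hτ : 0 < τ) :
    (∫ x : ℝ, Real.exp (-(x - 2 * τ) ^ 2 / (4 * τ))) = 2 * Real.sqrt (Real.pi * τ) := by
  have h0 : (fun x : ℝ => Real.exp (-(x - 2 * τ) ^ 2 / (4 * τ)))
      = fun x : ℝ => Real.exp (-(1 / (4 * τ)) * (x - 2 * τ) ^ 2) := by
    funext x; congr 1; field_simp
  rw [h0, integral_sub_right_eq_self (fun x : ℝ => Real.exp (-(1 / (4 * τ)) * x ^ 2)) (2 * τ),
    integral_gaussian]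
  rw [show Real.pi / (1 / (4 * τ)) = 4 * (Real.pi * τ) by field_simp,
    show (4 : ℝ) * (Real.pi * τ) = 2 ^ 2 * (Real.pi * τ) by norm_num,
    Real.sqrt_mul (by positivity), Real.sqrt_sq (by norm_num)]
end gauss


section convex
variable {Ut g : ℝ → ℝ}

lemma slope_le_g (hconv : ConvexOn ℝ (Ioi 0) Ut)
    (hg : ∀ y > (0 : ℝ), HasDerivWithinAt Ut (g y) (Ioi y) y)
    {w z : ℝ} (hw : 0 < w) (hwz : w < z) : slope Ut w z ≤ g z := by
  have hz : (0 : ℝ) < z := hw.trans hwz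
  have ht := (hasDerivWithinAt_iff_tendsto_slope' notMem_Ioi_self).mp (hg z hz)
  refine ge_of_tendsto ht ?_
  filter_upwards [self_mem_nhdsWithin] with t (ht' : t ∈ Ioi z)
  have h := (hconv.slope_mono (mem_Ioi.mpr hz))
    (show w ∈ Ioi 0 \ {z} from ⟨hw, by simp [hwz.ne]⟩)
    (show t ∈ Ioi 0 \ {z} from ⟨hz.trans ht', by simp [(mem_Ioi.mp ht').ne']⟩)
    (hwz.le.trans (le_of_lt ht'))
  rwa [slope_comm] at h

lemma g_le_slope (hconv : ConvexOn ℝ (Ioi 0) Ut)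
    (hg : ∀ y > (0 : ℝ), HasDerivWithinAt Ut (g y) (Ioi y) y)
    {w z : ℝ} (hw : 0 < w) (hwz : w < z) : g w ≤ slope Ut w z :=
  hconv.le_slope_of_hasDerivWithinAt_Ioi (mem_Ioi.mpr hw) (mem_Ioi.mpr (hw.trans hwz)) hwz
    (hg w hw)

lemma g_mono (hconv : ConvexOn ℝ (Ioi 0) Ut)
    (hg : ∀ y > (0 : ℝ), HasDerivWithinAt Ut (g y) (Ioi y) y)
    {w z : ℝ} (hw : 0 < w) (hwz : w ≤ z) : g w ≤ g z := by
  rcases eq_or_lt_of_le hwz with rfl | h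
  · exact le_refl _
  · exact (g_le_slope hconv hg hw h).trans (slope_le_g hconv hg hw h)

lemma g_nonpos (hmono : AntitoneOn Ut (Ioi 0)) (hconv : ConvexOn ℝ (Ioi 0) Ut)
    (hg : ∀ y > (0 : ℝ), HasDerivWithinAt Ut (g y) (Ioi y) y)
    {z : ℝ} (hz : 0 < z) : g z ≤ 0 := by
  have h := g_le_slope hconv hg hz (lt_add_one z)
  have h2 : Ut (z + 1) ≤ Ut z :=
    hmono (mem_Ioi.mpr hz) (mem_Ioi.mpr (by linarith)) (by linarith)
  have h3 : slope Ut z (z + 1) ≤ 0 := by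
    rw [slope_def_field]
    apply div_nonpos_of_nonpos_of_nonneg <;> linarith
  linarith

/-- quantitative lower bound on `g` -/
lemma g_lower {C q M : ℝ} (hC : 0 < C)
    (hconv : ConvexOn ℝ (Ioi 0) Ut)
    (hbdd : ∀ y > (0 : ℝ), M ≤ Ut y)
    (hgrowth : ∀ y > (0 : ℝ), Ut y ≤ C * (1 + y ^ q))
    (hg : ∀ y > (0 : ℝ), HasDerivWithinAt Ut (g y) (Ioi y) y)
    {z : ℝ} (hz : 0 < z) :
    -((2 / z) * (C + C * (z / 2) ^ q + |M|)) ≤ g z := by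
  have h2 : (0:ℝ) < z / 2 := by linarith
  have h := slope_le_g hconv hg h2 (by linarith : z / 2 < z)
  rw [slope_def_field] at h
  have hb1 : M ≤ Ut z := hbdd z hz
  have hb2 : Ut (z / 2) ≤ C * (1 + (z / 2) ^ q) := hgrowth _ h2
  have hM : -|M| ≤ M := neg_abs_le M
  have hden : z - z / 2 = z / 2 := by ring
  have hnum : -(C + C * (z / 2) ^ q + |M|) ≤ Ut z - Ut (z / 2) := by linarith
  have hstep : -(C + C * (z / 2) ^ q + |M|) / (z / 2) ≤ (Ut z - Ut (z / 2)) / (z - z / 2) := by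
    rw [hden]
    gcongr
  have heq : -(C + C * (z / 2) ^ q + |M|) / (z / 2) = -((2 / z) * (C + C * (z / 2) ^ q + |M|)) := by
    field_simp
  linarith [heq ▸ hstep, h]

/-- Lipschitz bound on `[a, ∞)` -/
lemma Ut_lip (hmono : AntitoneOn Ut (Ioi 0)) (hconv : ConvexOn ℝ (Ioi 0) Ut)
    (hg : ∀ y > (0 : ℝ), HasDerivWithinAt Ut (g y) (Ioi y) y)
    {a z w : ℝ} (ha : 0 < a) (hz : a ≤ z) (hw : a ≤ w) :
    |Ut z - Ut w| ≤ -g a * |z - w| := by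
  wlog hzw : z ≤ w generalizing z w
  · rw [abs_sub_comm, abs_sub_comm z w]; exact this hw hz (le_of_not_ge hzw)
  rcases eq_or_lt_of_le hzw with rfl | hlt
  · simp
  have hz0 : 0 < z := lt_of_lt_of_le ha hz
  have h1 : g z ≤ slope Ut z w := g_le_slope hconv hg hz0 hlt
  have h2 : g a ≤ g z := g_mono hconv hg ha hz
  have h3 : slope Ut z w ≤ 0 := by
    rw [slope_def_field]
    apply div_nonpos_of_nonpos_of_nonneg
    · have := hmono (mem_Ioi.mpr hz0) (mem_Ioi.mpr (hz0.trans hlt)) hlt.le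
      linarith
    · linarith
  have hs : |slope Ut z w| ≤ -g a := by
    rw [abs_of_nonpos h3]; linarith
  have heq : Ut w - Ut z = slope Ut z w * (w - z) := by
    rw [slope_def_field, div_mul_cancel₀]
    linarith
  rw [abs_sub_comm, heq, abs_mul, abs_sub_comm w z]
  exact mul_le_mul_of_nonneg_right hs (abs_nonneg _)

end convex


section ae
variable {Ut g : ℝ → ℝ}

/-- `g ∘ exp` is monotone on all of `ℝ`. -/
lemma G_mono (hconv : ConvexOn ℝ (Ioi 0) Ut)
    (hg : ∀ y > (0 : ℝ), HasDerivWithinAt Ut (g y) (Ioi y) y) :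
    Monotone (fun t => g (Real.exp t)) := fun s t hst =>
  g_mono hconv hg (Real.exp_pos s) (Real.exp_le_exp.mpr hst)

lemma g_meas (hconv : ConvexOn ℝ (Ioi 0) Ut)
    (hg : ∀ y > (0 : ℝ), HasDerivWithinAt Ut (g y) (Ioi y) y)
    {y τ : ℝ} (hy : 0 < y) :
    Measurable (fun x : ℝ => g (y * Real.exp (x - τ))) := by
  have h1 : Measurable (fun t => g (Real.exp t)) := (G_mono hconv hg).measurable
  have h2 : Measurable (fun x : ℝ => Real.log y + (x - τ)) := by measurability
  have h := h1.comp h2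
  have heq : (fun x : ℝ => g (y * Real.exp (x - τ)))
      = (fun t => g (Real.exp t)) ∘ (fun x : ℝ => Real.log y + (x - τ)) := by
    funext x
    simp only [Function.comp_apply, Real.exp_add, Real.exp_log hy]
  rw [heq]
  exact h

/-- At points where `g ∘ exp ∘ log` is continuous, `Ut` is differentiable with derivative `g`. -/
lemma hasDerivAt_of_cont (hconv : ConvexOn ℝ (Ioi 0) Ut)
    (hg : ∀ y > (0 : ℝ), HasDerivWithinAt Ut (g y) (Ioi y) y)
    {z : ℝ} (hz : 0 < z) (hc : ContinuousAt (fun t => g (Real.exp t)) (Real.log z)) :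
    HasDerivAt Ut (g z) z := by
  rw [hasDerivAt_iff_tendsto_slope]
  have hgc : Tendsto (fun u : ℝ => g u) (nhdsWithin z {z}ᶜ) (nhds (g z)) := by
    have h1 : Tendsto (fun u : ℝ => Real.log u) (nhdsWithin z {z}ᶜ) (nhds (Real.log z)) :=
      ((Real.continuousAt_log hz.ne').tendsto).comp (nhdsWithin_le_nhds)
    have h2 : Tendsto (fun u : ℝ => g (Real.exp (Real.log u))) (nhdsWithin z {z}ᶜ)
        (nhds (g z)) := by
      have := hc.tendsto.comp h1
      simpa [Function.comp_def, Real.exp_log hz] using this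
    have h3 : ∀ᶠ u in nhdsWithin z {z}ᶜ, g (Real.exp (Real.log u)) = g u := by
      filter_upwards [eventually_nhdsWithin_of_eventually_nhds
        (eventually_gt_nhds hz)] with u hu
      rw [Real.exp_log hu]
    exact h2.congr' h3
  have key : ∀ᶠ u in nhdsWithin z {z}ᶜ, |slope Ut z u - g z| ≤ |g u - g z| := by
    filter_upwards [eventually_nhdsWithin_of_eventually_nhds (eventually_gt_nhds hz),
      self_mem_nhdsWithin] with u hu (hne : u ∈ ({z}ᶜ : Set ℝ))
    rcases lt_or_gt_of_ne (show u ≠ z from hne) with h | h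
    · -- u < z
      have h1 : g u ≤ slope Ut u z := g_le_slope hconv hg hu h
      have h2 : slope Ut u z ≤ g z := slope_le_g hconv hg hu h
      rw [slope_comm] at h1 h2
      rw [abs_sub_comm (g u)]
      rw [abs_of_nonpos (by linarith), abs_of_nonneg (by linarith)]
      linarith
    · -- z < u
      have h1 : g z ≤ slope Ut z u := g_le_slope hconv hg hz h
      have h2 : slope Ut z u ≤ g u := slope_le_g hconv hg hz h
      rw [abs_of_nonneg (by linarith), abs_of_nonneg (by linarith)]
      linarith
  have hto0 : Tendsto (fun u => |g u - g z|) (nhdsWithin z {z}ᶜ) (nhds 0) := by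
    have := hgc.sub_const (g z)
    simpa using this.abs
  rw [tendsto_iff_dist_tendsto_zero]
  apply squeeze_zero' (Eventually.of_forall fun u => dist_nonneg) ?_ hto0
  filter_upwards [key] with u hu
  rwa [Real.dist_eq]

/-- The set of `z > 0` where `Ut` may fail to be differentiable is countable. -/
lemma bad_countable (hconv : ConvexOn ℝ (Ioi 0) Ut)
    (hg : ∀ y > (0 : ℝ), HasDerivWithinAt Ut (g y) (Ioi y) y) :
    Set.Countable {z : ℝ | 0 < z ∧ ¬ ContinuousAt (fun t => g (Real.exp t)) (Real.log z)} := by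
  have h := (G_mono hconv hg).countable_not_continuousAt
  have : {z : ℝ | 0 < z ∧ ¬ ContinuousAt (fun t => g (Real.exp t)) (Real.log z)} ⊆
      Real.exp '' {t : ℝ | ¬ ContinuousAt (fun t => g (Real.exp t)) t} := by
    rintro z ⟨hz, hnc⟩
    exact ⟨Real.log z, hnc, Real.exp_log hz⟩
  exact (h.image _).mono this
end ae


section main
variable {Ut g : ℝ → ℝ} {C q M τ : ℝ}

lemma rpow_factor (hq : q ≠ 0) {y τ : ℝ} (hy : 0 < y) (x : ℝ) :
    (y * Real.exp (x - τ)) ^ q = y ^ q * Real.exp (-(q * τ)) * Real.exp (q * x) := by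
  rw [Real.mul_rpow hy.le (Real.exp_pos _).le,
    Real.rpow_def_of_pos (Real.exp_pos _), Real.log_exp, mul_assoc, ← Real.exp_add]
  congr 1
  ring

/-- Absolute bound for `Ut`. -/
lemma Ut_abs_bound (hC : 0 < C)
    (hbdd : ∀ y > (0 : ℝ), M ≤ Ut y)
    (hgrowth : ∀ y > (0 : ℝ), Ut y ≤ C * (1 + y ^ q))
    {z : ℝ} (hz : 0 < z) : |Ut z| ≤ |M| + C + C * z ^ q := by
  have h1 := hbdd z hz
  have h2 := hgrowth z hz
  have h3 : (0:ℝ) < z ^ q := Real.rpow_pos_of_pos hz q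
  rw [abs_le]
  constructor
  · have := neg_abs_le M; nlinarith
  · have := le_abs_self M
    have := abs_nonneg M
    nlinarith

/-- MAIN derivative lemma. -/
lemma main_deriv (hC : 0 < C) (hq : q < 0) (hτ : 0 < τ)
    (hmono : AntitoneOn Ut (Ioi 0))
    (hconv : ConvexOn ℝ (Ioi 0) Ut)
    (hbdd : ∀ y > (0 : ℝ), M ≤ Ut y)
    (hgrowth : ∀ y > (0 : ℝ), Ut y ≤ C * (1 + y ^ q))
    (hg : ∀ y > (0 : ℝ), HasDerivWithinAt Ut (g y) (Ioi y) y)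
    {y₀ : ℝ} (hy₀ : 0 < y₀) :
    Integrable (fun x : ℝ =>
        Real.exp (-x ^ 2 / (4 * τ)) * (g (y₀ * Real.exp (x - τ)) * Real.exp (x - τ))) ∧
      HasDerivAt (fun y => ∫ x : ℝ, Real.exp (-x ^ 2 / (4 * τ)) * Ut (y * Real.exp (x - τ)))
        (∫ x : ℝ, Real.exp (-x ^ 2 / (4 * τ)) * (g (y₀ * Real.exp (x - τ)) * Real.exp (x - τ)))
        y₀ := by
  set F : ℝ → ℝ → ℝ := fun y x => Real.exp (-x ^ 2 / (4 * τ)) * Ut (y * Real.exp (x - τ))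
    with hF
  set F' : ℝ → ℝ := fun x =>
    Real.exp (-x ^ 2 / (4 * τ)) * (g (y₀ * Real.exp (x - τ)) * Real.exp (x - τ)) with hF'
  have hUc : ContinuousOn Ut (Ioi 0) := hconv.continuousOn isOpen_Ioi
  have hball : ∀ y ∈ Metric.ball y₀ (y₀ / 2), y₀ / 2 < y := by
    intro y hy
    rw [Metric.mem_ball, Real.dist_eq, abs_lt] at hy
    linarith [hy.1]
  -- measurability of F y for y > 0
  have hFmeas : ∀ y : ℝ, 0 < y → AEStronglyMeasurable (F y) volume := by
    intro y hy
    apply Continuous.aestronglyMeasurable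
    apply Continuous.mul (by continuity)
    apply hUc.comp_continuous (by continuity)
    intro x
    exact mem_Ioi.mpr (by positivity)
  have hF_meas : ∀ᶠ y in nhds y₀, AEStronglyMeasurable (F y) volume := by
    filter_upwards [eventually_gt_nhds hy₀] with y hy using hFmeas y hy
  -- integrability of F y for all y > 0
  have hFint : ∀ y : ℝ, 0 < y → Integrable (F y) volume := by
    intro y hy
    have hB : Integrable (fun x : ℝ => (|M| + C) * Real.exp (-x ^ 2 / (4 * τ) + 0 * x)
        + (C * y ^ q * Real.exp (-(q * τ))) * Real.exp (-x ^ 2 / (4 * τ) + q * x)) :=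
      ((integrable_gauss hτ 0).const_mul _).add ((integrable_gauss hτ q).const_mul _)
    refine Integrable.mono hB (hFmeas y hy) (Eventually.of_forall fun x => ?_)
    have hz : 0 < y * Real.exp (x - τ) := by positivity
    have h1 := Ut_abs_bound hC hbdd hgrowth hz
    have h2 := rpow_factor (τ := τ) hq.ne hy x
    have hyq : (0:ℝ) < y ^ q := Real.rpow_pos_of_pos hy q
    have hrhs : (|M| + C) * Real.exp (-x ^ 2 / (4 * τ) + 0 * x)
        + (C * y ^ q * Real.exp (-(q * τ))) * Real.exp (-x ^ 2 / (4 * τ) + q * x)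
        = Real.exp (-x ^ 2 / (4 * τ)) * ((|M| + C) + C * (y * Real.exp (x - τ)) ^ q) := by
      rw [h2]
      simp only [zero_mul, add_zero, Real.exp_add]
      ring
    have hBnn : 0 ≤ (|M| + C) * Real.exp (-x ^ 2 / (4 * τ) + 0 * x)
        + (C * y ^ q * Real.exp (-(q * τ))) * Real.exp (-x ^ 2 / (4 * τ) + q * x) := by
      have := abs_nonneg M
      positivity
    rw [Real.norm_eq_abs, Real.norm_eq_abs, abs_mul, Real.abs_exp, abs_of_nonneg hBnn, hrhs]
    apply mul_le_mul_of_nonneg_left _ (Real.exp_pos _).le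
    linarith
  -- measurability of F'
  have m1 : Measurable fun x : ℝ => Real.exp (-x ^ 2 / (4 * τ)) :=
    (Real.continuous_exp.comp (((continuous_pow 2).neg).div_const (4 * τ))).measurable
  have m2 : Measurable fun x : ℝ => Real.exp (x - τ) :=
    (Real.continuous_exp.comp (continuous_id.sub continuous_const)).measurable
  have hF'_meas : AEStronglyMeasurable F' volume :=
    (m1.mul ((g_meas hconv hg hy₀).mul m2)).aestronglyMeasurable
  -- the Lipschitz bound
  set bound : ℝ → ℝ := fun x => (4 / y₀) * (C + |M|) * Real.exp (-x ^ 2 / (4 * τ) + 0 * x)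
      + (4 * C / y₀) * (y₀ / 4) ^ q * Real.exp (-(q * τ)) * Real.exp (-x ^ 2 / (4 * τ) + q * x)
    with hbound
  have hbound_nn : ∀ x, 0 ≤ bound x := by
    intro x
    have := abs_nonneg M
    have : (0:ℝ) < (y₀ / 4) ^ q := Real.rpow_pos_of_pos (by linarith) q
    positivity
  have hbound_int : Integrable bound volume :=
    ((integrable_gauss hτ 0).const_mul _).add ((integrable_gauss hτ q).const_mul _)
  have hlip_le : ∀ x : ℝ,
      Real.exp (-x ^ 2 / (4 * τ)) * (-g (y₀ / 2 * Real.exp (x - τ))) * Real.exp (x - τ)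
        ≤ bound x := by
    intro x
    have ha : (0:ℝ) < y₀ / 2 * Real.exp (x - τ) := by positivity
    have hlow := g_lower hC hconv hbdd hgrowth hg ha
    have h2 : (y₀ / 2 * Real.exp (x - τ) / 2) ^ q
        = (y₀ / 4) ^ q * Real.exp (-(q * τ)) * Real.exp (q * x) := by
      have : y₀ / 2 * Real.exp (x - τ) / 2 = y₀ / 4 * Real.exp (x - τ) := by ring
      rw [this, rpow_factor (τ := τ) hq.ne (by linarith) x]
    have hE : (0:ℝ) < Real.exp (x - τ) := Real.exp_pos _
    have key : (-g (y₀ / 2 * Real.exp (x - τ))) * Real.exp (x - τ)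
        ≤ (4 / y₀) * (C + |M|) + (4 * C / y₀) * (y₀ / 4) ^ q
            * Real.exp (-(q * τ)) * Real.exp (q * x) := by
      have h3 : (-g (y₀ / 2 * Real.exp (x - τ))) * Real.exp (x - τ)
          ≤ (2 / (y₀ / 2 * Real.exp (x - τ))) * (C + C * (y₀ / 2 * Real.exp (x - τ) / 2) ^ q + |M|)
              * Real.exp (x - τ) := by
        apply mul_le_mul_of_nonneg_right _ hE.le
        linarith
      have h4 : (2 / (y₀ / 2 * Real.exp (x - τ))) * (C + C * (y₀ / 2 * Real.exp (x - τ) / 2) ^ q + |M|)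
              * Real.exp (x - τ)
          = (4 / y₀) * (C + |M|) + (4 * C / y₀) * (y₀ / 4) ^ q
            * Real.exp (-(q * τ)) * Real.exp (q * x) := by
        rw [h2]
        field_simp
        ring
      linarith
    have hexp0 : Real.exp (-x ^ 2 / (4 * τ) + 0 * x) = Real.exp (-x ^ 2 / (4 * τ)) := by
      rw [zero_mul, add_zero]
    have hexpq : Real.exp (-x ^ 2 / (4 * τ) + q * x)
        = Real.exp (-x ^ 2 / (4 * τ)) * Real.exp (q * x) := by rw [Real.exp_add]
    simp only [hbound]
    rw [hexp0, hexpq]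
    have := mul_le_mul_of_nonneg_left key (Real.exp_pos (-x ^ 2 / (4 * τ))).le
    calc Real.exp (-x ^ 2 / (4 * τ)) * (-g (y₀ / 2 * Real.exp (x - τ))) * Real.exp (x - τ)
        = Real.exp (-x ^ 2 / (4 * τ)) * ((-g (y₀ / 2 * Real.exp (x - τ))) * Real.exp (x - τ)) := by
          ring
      _ ≤ Real.exp (-x ^ 2 / (4 * τ)) * ((4 / y₀) * (C + |M|) + (4 * C / y₀) * (y₀ / 4) ^ q
            * Real.exp (-(q * τ)) * Real.exp (q * x)) := this
      _ = _ := by ring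
  have h_lipsch : ∀ᵐ x : ℝ ∂volume,
      LipschitzOnWith (Real.nnabs (bound x)) (fun y => F y x) (Metric.ball y₀ (y₀ / 2)) := by
    refine Eventually.of_forall fun x => ?_
    rw [lipschitzOnWith_iff_dist_le_mul]
    intro y hy y' hy'
    have hy2 := hball y hy
    have hy2' := hball y' hy'
    have ha : (0:ℝ) < y₀ / 2 * Real.exp (x - τ) := by positivity
    have hE : (0:ℝ) < Real.exp (x - τ) := Real.exp_pos _
    have hlz : y₀ / 2 * Real.exp (x - τ) ≤ y * Real.exp (x - τ) := by
      apply mul_le_mul_of_nonneg_right (by linarith) hE.le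
    have hlz' : y₀ / 2 * Real.exp (x - τ) ≤ y' * Real.exp (x - τ) := by
      apply mul_le_mul_of_nonneg_right (by linarith) hE.le
    have hlip := Ut_lip hmono hconv hg ha hlz hlz'
    rw [Real.dist_eq, Real.dist_eq]
    have hFd : F y x - F y' x = Real.exp (-x ^ 2 / (4 * τ))
        * (Ut (y * Real.exp (x - τ)) - Ut (y' * Real.exp (x - τ))) := by
      rw [hF]; ring
    have hdiff : |y * Real.exp (x - τ) - y' * Real.exp (x - τ)| = Real.exp (x - τ) * |y - y'| := by
      rw [show y * Real.exp (x - τ) - y' * Real.exp (x - τ) = Real.exp (x - τ) * (y - y') by ring,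
        abs_mul, Real.abs_exp]
    have step : Real.exp (-x ^ 2 / (4 * τ)) * |Ut (y * Real.exp (x - τ)) - Ut (y' * Real.exp (x - τ))|
        ≤ Real.exp (-x ^ 2 / (4 * τ)) * (-g (y₀ / 2 * Real.exp (x - τ))) * Real.exp (x - τ)
          * |y - y'| := by
      calc Real.exp (-x ^ 2 / (4 * τ)) * |Ut (y * Real.exp (x - τ)) - Ut (y' * Real.exp (x - τ))|
          ≤ Real.exp (-x ^ 2 / (4 * τ))
            * (-g (y₀ / 2 * Real.exp (x - τ)) * |y * Real.exp (x - τ) - y' * Real.exp (x - τ)|) :=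
            mul_le_mul_of_nonneg_left (hlip) (Real.exp_pos _).le
        _ = _ := by rw [hdiff]; ring
    have hcoe : (Real.nnabs (bound x) : ℝ) = bound x := by
      rw [Real.coe_nnabs, abs_of_nonneg (hbound_nn x)]
    rw [hcoe]
    calc |F y x - F y' x|
        = Real.exp (-x ^ 2 / (4 * τ))
            * |Ut (y * Real.exp (x - τ)) - Ut (y' * Real.exp (x - τ))| := by
          rw [hFd, abs_mul, Real.abs_exp]
      _ ≤ Real.exp (-x ^ 2 / (4 * τ)) * (-g (y₀ / 2 * Real.exp (x - τ)))
          * Real.exp (x - τ) * |y - y'| := step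
      _ ≤ bound x * |y - y'| :=
          mul_le_mul_of_nonneg_right (hlip_le x) (abs_nonneg _)
  -- a.e. differentiability
  have h_diff : ∀ᵐ x : ℝ ∂volume, HasDerivAt (fun y => F y x) (F' x) y₀ := by
    set D := {z : ℝ | 0 < z ∧ ¬ ContinuousAt (fun t => g (Real.exp t)) (Real.log z)} with hD
    have hDc : Set.Countable D := bad_countable hconv hg
    have hN : Set.Countable {x : ℝ | y₀ * Real.exp (x - τ) ∈ D} := by
      have hsub : {x : ℝ | y₀ * Real.exp (x - τ) ∈ D}
          ⊆ (fun z => Real.log z - Real.log y₀ + τ) '' D := by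
        intro x hx
        refine ⟨y₀ * Real.exp (x - τ), hx, ?_⟩
        show Real.log (y₀ * Real.exp (x - τ)) - Real.log y₀ + τ = x
        rw [Real.log_mul hy₀.ne' (Real.exp_pos _).ne', Real.log_exp]
        ring
      exact (hDc.image _).mono hsub
    have hnull : volume {x : ℝ | y₀ * Real.exp (x - τ) ∈ D} = 0 := hN.measure_zero _
    rw [MeasureTheory.ae_iff]
    refine measure_mono_null ?_ hnull
    intro x hx
    simp only [Set.mem_setOf_eq] at hx ⊢
    by_contra hmem
    apply hx
    have hz : 0 < y₀ * Real.exp (x - τ) := by positivity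
    have hc : ContinuousAt (fun t => g (Real.exp t)) (Real.log (y₀ * Real.exp (x - τ))) := by
      by_contra hnc
      exact hmem ⟨hz, hnc⟩
    have hUd := hasDerivAt_of_cont hconv hg hz hc
    have hlin : HasDerivAt (fun y : ℝ => y * Real.exp (x - τ)) (Real.exp (x - τ)) y₀ := by
      simpa using (hasDerivAt_id y₀).mul_const (Real.exp (x - τ))
    have hcomp := HasDerivAt.comp y₀ hUd hlin
    have := hcomp.const_mul (Real.exp (-x ^ 2 / (4 * τ)))
    simpa [hF, hF', mul_comm, mul_assoc, mul_left_comm] using this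
  exact hasDerivAt_integral_of_dominated_loc_of_lip (Metric.ball_mem_nhds y₀ (by positivity : (0:ℝ) < y₀ / 2))
    hF_meas (hFint y₀ hy₀) hF'_meas h_lipsch hbound_int h_diff
end main


section lims
variable {Ut g : ℝ → ℝ} {C q M τ : ℝ}

lemma exp_shift (hτ : 0 < τ) (x : ℝ) :
    Real.exp (-(x - 2 * τ) ^ 2 / (4 * τ)) = Real.exp (-x ^ 2 / (4 * τ)) * Real.exp (x - τ) := by
  rw [← Real.exp_add]
  congr 1
  field_simp
  ring

/-- the limit of `g` in `EReal` -/
lemma tendsto_g_sInf (hconv : ConvexOn ℝ (Ioi 0) Ut)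
    (hg : ∀ y > (0 : ℝ), HasDerivWithinAt Ut (g y) (Ioi y) y) :
    Tendsto (fun y => (g y : EReal)) (nhdsWithin 0 (Ioi 0))
      (nhds (sInf ((fun z => (g z : EReal)) '' Ioi 0))) := by
  set L := sInf ((fun z => (g z : EReal)) '' Ioi 0) with hL
  rw [tendsto_order]
  constructor
  · intro a ha
    filter_upwards [self_mem_nhdsWithin] with y hy
    exact lt_of_lt_of_le ha (sInf_le ⟨y, hy, rfl⟩)
  · intro a ha
    have ha' : ∃ b ∈ (fun z => (g z : EReal)) '' Ioi 0, b < a := by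
      rw [← sInf_lt_iff]
      exact ha
    obtain ⟨b, ⟨z₀, hz₀, rfl⟩, hba⟩ := ha'
    filter_upwards [Ioo_mem_nhdsGT_of_mem (⟨le_refl 0, hz₀⟩ : (0:ℝ) ∈ Ico 0 z₀)] with y hy
    exact lt_of_le_of_lt (EReal.coe_le_coe_iff.mpr (g_mono hconv hg hy.1 hy.2.le)) hba

/-- tendsto of composed map -/
lemma tendsto_scale (a : ℝ) (ha : 0 < a) :
    Tendsto (fun y : ℝ => y * a) (nhdsWithin 0 (Ioi 0)) (nhdsWithin 0 (Ioi 0)) := by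
  apply tendsto_nhdsWithin_of_tendsto_nhds_of_eventually_within
  · have : Tendsto (fun y : ℝ => y * a) (nhds 0) (nhds (0 * a)) :=
      (continuous_mul_right a).tendsto 0
    simpa using this.mono_left nhdsWithin_le_nhds
  · filter_upwards [self_mem_nhdsWithin] with y hy
    exact mem_Ioi.mpr (mul_pos hy ha)

/-- Case `L = ⊥`. -/
lemma tendsto_v'_bot (hC : 0 < C) (hq : q < 0) (hτ : 0 < τ)
    (hmono : AntitoneOn Ut (Ioi 0))
    (hconv : ConvexOn ℝ (Ioi 0) Ut)
    (hbdd : ∀ y > (0 : ℝ), M ≤ Ut y)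
    (hgrowth : ∀ y > (0 : ℝ), Ut y ≤ C * (1 + y ^ q))
    (hg : ∀ y > (0 : ℝ), HasDerivWithinAt Ut (g y) (Ioi y) y)
    (hbot : Tendsto (fun y => (g y : EReal)) (nhdsWithin 0 (Ioi 0)) (nhds ⊥)) :
    Tendsto (fun y => (((2 * Real.sqrt (Real.pi * τ))⁻¹ *
        ∫ x : ℝ, Real.exp (-(x - 2 * τ) ^ 2 / (4 * τ)) * g (y * Real.exp (x - τ)) : ℝ) : EReal))
      (nhdsWithin 0 (Ioi 0)) (nhds ⊥) := by
  have hc0 : (0:ℝ) < (2 * Real.sqrt (Real.pi * τ))⁻¹ := by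
    have : (0:ℝ) < Real.sqrt (Real.pi * τ) := Real.sqrt_pos.mpr (by positivity)
    positivity
  set c0 := (2 * Real.sqrt (Real.pi * τ))⁻¹ with hc0def
  -- the window constant
  set β := ∫ x in Icc τ (3 * τ), Real.exp (-(x - 2 * τ) ^ 2 / (4 * τ)) with hβ
  have hgauss_int : Integrable (fun x : ℝ => Real.exp (-(x - 2 * τ) ^ 2 / (4 * τ))) := by
    refine ((integrable_gauss hτ 1).const_mul (Real.exp (-τ))).congr
      (Eventually.of_forall fun x => ?_)
    show Real.exp (-τ) * Real.exp (-x ^ 2 / (4 * τ) + 1 * x)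
        = Real.exp (-(x - 2 * τ) ^ 2 / (4 * τ))
    rw [exp_shift hτ x, ← Real.exp_add, ← Real.exp_add]
    congr 1
    ring
  have hβpos : 0 < β := by
    have hint : IntegrableOn (fun x : ℝ => Real.exp (-(x - 2 * τ) ^ 2 / (4 * τ)))
        (Icc τ (3 * τ)) := hgauss_int.integrableOn
    have hconst : IntegrableOn (fun _ : ℝ => Real.exp (-τ / 4)) (Icc τ (3 * τ)) :=
      (integrableOn_const_iff (hC := by finiteness)).mpr (Or.inr (by
        rw [Real.volume_Icc]; exact ENNReal.ofReal_lt_top))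
    have hle : ∀ x ∈ Icc τ (3 * τ),
        Real.exp (-τ / 4) ≤ Real.exp (-(x - 2 * τ) ^ 2 / (4 * τ)) := by
      intro x hx
      apply Real.exp_le_exp.mpr
      rw [div_le_div_iff₀ (by positivity) (by positivity)]
      nlinarith [hx.1, hx.2]
    have h1 : ∫ x in Icc τ (3 * τ), Real.exp (-τ / 4) ≤ β :=
      setIntegral_mono_on hconst hint measurableSet_Icc hle
    have h2 : (0:ℝ) < ∫ x in Icc τ (3 * τ), Real.exp (-τ / 4) := by
      rw [setIntegral_const, measureReal_def, Real.volume_Icc, smul_eq_mul]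
      have : (0:ℝ) < 3 * τ - τ := by linarith
      rw [ENNReal.toReal_ofReal this.le]
      positivity
    linarith
  rw [EReal.tendsto_nhds_bot_iff_real]
  intro r
  have hcomp : Tendsto (fun y : ℝ => (g (y * Real.exp (2 * τ)) : EReal))
      (nhdsWithin 0 (Ioi 0)) (nhds ⊥) :=
    hbot.comp (tendsto_scale (Real.exp (2 * τ)) (Real.exp_pos _))
  have hrb := EReal.tendsto_nhds_bot_iff_real.mp hcomp (r / (c0 * β) - 1)
  filter_upwards [hrb, self_mem_nhdsWithin] with y hylt (hy0 : y ∈ Ioi 0)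
  rw [mem_Ioi] at hy0
  have hyg : g (y * Real.exp (2 * τ)) < r / (c0 * β) - 1 := by exact_mod_cast hylt
  set f : ℝ → ℝ := fun x => Real.exp (-(x - 2 * τ) ^ 2 / (4 * τ)) * g (y * Real.exp (x - τ))
    with hf
  have h_int : Integrable f := by
    refine (main_deriv hC hq hτ hmono hconv hbdd hgrowth hg hy0).1.congr
      (Eventually.of_forall fun x => ?_)
    show Real.exp (-x ^ 2 / (4 * τ)) * (g (y * Real.exp (x - τ)) * Real.exp (x - τ)) = f x
    rw [hf]
    show _ = Real.exp (-(x - 2 * τ) ^ 2 / (4 * τ)) * g (y * Real.exp (x - τ))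
    rw [exp_shift hτ x]
    ring
  have hfnonpos : ∀ x : ℝ, f x ≤ 0 := by
    intro x
    have hz : (0:ℝ) < y * Real.exp (x - τ) := by positivity
    have := g_nonpos hmono hconv hg hz
    have he : (0:ℝ) ≤ Real.exp (-(x - 2 * τ) ^ 2 / (4 * τ)) := (Real.exp_pos _).le
    exact mul_nonpos_of_nonneg_of_nonpos he this
  have hs : MeasurableSet (Icc τ (3 * τ)) := measurableSet_Icc
  have h_split := integral_add_compl hs h_int
  have h_compl : (∫ x in (Icc τ (3 * τ))ᶜ, f x) ≤ 0 :=
    integral_nonpos fun x => hfnonpos x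
  have h_window : (∫ x in Icc τ (3 * τ), f x)
      ≤ ∫ x in Icc τ (3 * τ),
          Real.exp (-(x - 2 * τ) ^ 2 / (4 * τ)) * g (y * Real.exp (2 * τ)) := by
    refine setIntegral_mono_on h_int.integrableOn
      ((hgauss_int.mul_const _).integrableOn) hs fun x hx => ?_
    have hz : (0:ℝ) < y * Real.exp (x - τ) := by positivity
    have harg : y * Real.exp (x - τ) ≤ y * Real.exp (2 * τ) :=
      mul_le_mul_of_nonneg_left (Real.exp_le_exp.mpr (by linarith [hx.2])) hy0.le
    exact mul_le_mul_of_nonneg_left (g_mono hconv hg hz harg) (Real.exp_pos _).le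
  have h_eval : (∫ x in Icc τ (3 * τ),
      Real.exp (-(x - 2 * τ) ^ 2 / (4 * τ)) * g (y * Real.exp (2 * τ)))
      = β * g (y * Real.exp (2 * τ)) := integral_mul_const _ _
  have hIle : (∫ x, f x) ≤ β * g (y * Real.exp (2 * τ)) := by
    rw [← h_split]
    have := h_window.trans_eq h_eval
    linarith
  have hcb : (0:ℝ) < c0 * β := mul_pos hc0 hβpos
  have hfin : c0 * (∫ x, f x) < r := by
    have h1 : c0 * (∫ x, f x) ≤ c0 * (β * g (y * Real.exp (2 * τ))) :=
      mul_le_mul_of_nonneg_left hIle hc0.le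
    have h2 : c0 * (β * g (y * Real.exp (2 * τ))) = (c0 * β) * g (y * Real.exp (2 * τ)) := by
      ring
    have h3 : (c0 * β) * g (y * Real.exp (2 * τ)) < (c0 * β) * (r / (c0 * β)) := by
      apply mul_lt_mul_of_pos_left _ hcb
      linarith
    have h4 : (c0 * β) * (r / (c0 * β)) = r := by
      field_simp
    linarith
  exact_mod_cast EReal.coe_lt_coe_iff.mpr hfin

/-- Case `L` finite. -/
lemma tendsto_v'_real (hC : 0 < C) (hq : q < 0) (hτ : 0 < τ)
    (hmono : AntitoneOn Ut (Ioi 0))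
    (hconv : ConvexOn ℝ (Ioi 0) Ut)
    (hbdd : ∀ y > (0 : ℝ), M ≤ Ut y)
    (hgrowth : ∀ y > (0 : ℝ), Ut y ≤ C * (1 + y ^ q))
    (hg : ∀ y > (0 : ℝ), HasDerivWithinAt Ut (g y) (Ioi y) y)
    {l : ℝ}
    (hfin : Tendsto (fun y => (g y : EReal)) (nhdsWithin 0 (Ioi 0)) (nhds (l : EReal)))
    (hlb : ∀ z > (0 : ℝ), l ≤ g z) :
    Tendsto (fun y => (((2 * Real.sqrt (Real.pi * τ))⁻¹ *
        ∫ x : ℝ, Real.exp (-(x - 2 * τ) ^ 2 / (4 * τ)) * g (y * Real.exp (x - τ)) : ℝ) : EReal))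
      (nhdsWithin 0 (Ioi 0)) (nhds (l : EReal)) := by
  have hsq : (0:ℝ) < Real.sqrt (Real.pi * τ) := Real.sqrt_pos.mpr (by positivity)
  set c0 := (2 * Real.sqrt (Real.pi * τ))⁻¹ with hc0def
  have hgauss_int : Integrable (fun x : ℝ => Real.exp (-(x - 2 * τ) ^ 2 / (4 * τ))) := by
    refine ((integrable_gauss hτ 1).const_mul (Real.exp (-τ))).congr
      (Eventually.of_forall fun x => ?_)
    show Real.exp (-τ) * Real.exp (-x ^ 2 / (4 * τ) + 1 * x)
        = Real.exp (-(x - 2 * τ) ^ 2 / (4 * τ))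
    rw [exp_shift hτ x, ← Real.exp_add, ← Real.exp_add]
    congr 1
    ring
  rw [EReal.tendsto_coe]
  have hg_real : Tendsto g (nhdsWithin 0 (Ioi 0)) (nhds l) := EReal.tendsto_coe.mp hfin
  have mexp : Measurable fun x : ℝ => Real.exp (-(x - 2 * τ) ^ 2 / (4 * τ)) :=
    (Real.continuous_exp.comp
      ((((continuous_id.sub continuous_const).pow 2).neg).div_const (4 * τ))).measurable
  have hF_meas : ∀ᶠ y in nhdsWithin (0:ℝ) (Ioi 0),
      AEStronglyMeasurable
        (fun x : ℝ => Real.exp (-(x - 2 * τ) ^ 2 / (4 * τ)) * g (y * Real.exp (x - τ)))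
        volume := by
    filter_upwards [self_mem_nhdsWithin] with y (hy : y ∈ Ioi 0)
    exact (mexp.mul (g_meas hconv hg (mem_Ioi.mp hy))).aestronglyMeasurable
  have h_bound : ∀ᶠ y in nhdsWithin (0:ℝ) (Ioi 0), ∀ᵐ x : ℝ ∂volume,
      ‖Real.exp (-(x - 2 * τ) ^ 2 / (4 * τ)) * g (y * Real.exp (x - τ))‖
        ≤ |l| * Real.exp (-(x - 2 * τ) ^ 2 / (4 * τ)) := by
    filter_upwards [self_mem_nhdsWithin] with y (hy : y ∈ Ioi 0)
    refine Eventually.of_forall fun x => ?_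
    rw [mem_Ioi] at hy
    have hz : (0:ℝ) < y * Real.exp (x - τ) := by positivity
    have h1 := hlb _ hz
    have h2 := g_nonpos hmono hconv hg hz
    have habs : |g (y * Real.exp (x - τ))| ≤ |l| := by
      rw [abs_of_nonpos h2]
      have := neg_abs_le l
      linarith
    rw [Real.norm_eq_abs, abs_mul, Real.abs_exp]
    calc Real.exp (-(x - 2 * τ) ^ 2 / (4 * τ)) * |g (y * Real.exp (x - τ))|
        ≤ Real.exp (-(x - 2 * τ) ^ 2 / (4 * τ)) * |l| :=
          mul_le_mul_of_nonneg_left habs (Real.exp_pos _).le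
      _ = |l| * Real.exp (-(x - 2 * τ) ^ 2 / (4 * τ)) := by ring
  have bound_int : Integrable (fun x : ℝ => |l| * Real.exp (-(x - 2 * τ) ^ 2 / (4 * τ))) :=
    hgauss_int.const_mul _
  have h_lim : ∀ᵐ x : ℝ ∂volume,
      Tendsto (fun y => Real.exp (-(x - 2 * τ) ^ 2 / (4 * τ)) * g (y * Real.exp (x - τ)))
        (nhdsWithin 0 (Ioi 0)) (nhds (Real.exp (-(x - 2 * τ) ^ 2 / (4 * τ)) * l)) := by
    refine Eventually.of_forall fun x => ?_
    have h1 : Tendsto (fun y : ℝ => g (y * Real.exp (x - τ))) (nhdsWithin 0 (Ioi 0))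
        (nhds l) := hg_real.comp (tendsto_scale (Real.exp (x - τ)) (Real.exp_pos _))
    exact h1.const_mul _
  have htend := tendsto_integral_filter_of_dominated_convergence
    (μ := volume) (F := fun (y : ℝ) (x : ℝ) =>
      Real.exp (-(x - 2 * τ) ^ 2 / (4 * τ)) * g (y * Real.exp (x - τ)))
    (f := fun x : ℝ => Real.exp (-(x - 2 * τ) ^ 2 / (4 * τ)) * l)
    (bound := fun x : ℝ => |l| * Real.exp (-(x - 2 * τ) ^ 2 / (4 * τ)))
    hF_meas h_bound bound_int h_lim
  have heval : (∫ x : ℝ, Real.exp (-(x - 2 * τ) ^ 2 / (4 * τ)) * l)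
      = 2 * Real.sqrt (Real.pi * τ) * l := by
    rw [integral_mul_const, integral_gauss_shift hτ]
  have := htend.const_mul c0
  rw [heval] at this
  have hfin' : c0 * (2 * Real.sqrt (Real.pi * τ) * l) = l := by
    rw [hc0def]
    field_simp
  rw [hfin'] at this
  exact this

end lims


/-- the Gaussian-smoothed dual value function
`v(y) = (2√(πτ))⁻¹ ∫ e^{-x²/(4τ)} Ũ(y e^{x-τ}) dx` is differentiable with
`v'(y) = (2√(πτ))⁻¹ ∫ e^{-(x-2τ)²/(4τ)} D⁺Ũ(y e^{x-τ}) dx`, where `D⁺Ũ = g` is the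
right derivative of the convex function `Ũ`; moreover `v'` and `D⁺Ũ` have the same
limit as `y → 0⁺` in `[-∞, 0]`. -/
theorem stmt_4 (Ut g : ℝ → ℝ) (C q M τ : ℝ) (hC : 0 < C) (hq : q < 0) (hτ : 0 < τ)
    (hmono : AntitoneOn Ut (Ioi 0))
    (hconv : ConvexOn ℝ (Ioi 0) Ut)
    (hbdd : ∀ y > (0 : ℝ), M ≤ Ut y)
    (hgrowth : ∀ y > (0 : ℝ), Ut y ≤ C * (1 + y ^ q))
    (hg : ∀ y > (0 : ℝ), HasDerivWithinAt Ut (g y) (Ioi y) y) :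
    let v : ℝ → ℝ := fun y =>
      (2 * Real.sqrt (Real.pi * τ))⁻¹ *
        ∫ x : ℝ, Real.exp (-x ^ 2 / (4 * τ)) * Ut (y * Real.exp (x - τ))
    let v' : ℝ → ℝ := fun y =>
      (2 * Real.sqrt (Real.pi * τ))⁻¹ *
        ∫ x : ℝ, Real.exp (-(x - 2 * τ) ^ 2 / (4 * τ)) * g (y * Real.exp (x - τ))
    (∀ y > (0 : ℝ), HasDerivAt v (v' y) y) ∧
    ∃ L : EReal, L ≤ 0 ∧
      Tendsto (fun y => (g y : EReal)) (nhdsWithin 0 (Ioi 0)) (nhds L) ∧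
      Tendsto (fun y => (v' y : EReal)) (nhdsWithin 0 (Ioi 0)) (nhds L) := by
  intro v v'
  have hsq : (0:ℝ) < Real.sqrt (Real.pi * τ) := Real.sqrt_pos.mpr (by positivity)
  constructor
  · -- differentiability
    intro y hy
    have h := (main_deriv hC hq hτ hmono hconv hbdd hgrowth hg hy).2
    have h2 := h.const_mul ((2 * Real.sqrt (Real.pi * τ))⁻¹)
    have heq : v' y = (2 * Real.sqrt (Real.pi * τ))⁻¹ *
        ∫ x : ℝ, Real.exp (-x ^ 2 / (4 * τ)) * (g (y * Real.exp (x - τ)) * Real.exp (x - τ)) := by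
      show (2 * Real.sqrt (Real.pi * τ))⁻¹ *
          (∫ x : ℝ, Real.exp (-(x - 2 * τ) ^ 2 / (4 * τ)) * g (y * Real.exp (x - τ))) = _
      congr 1
      refine integral_congr_ae (Eventually.of_forall fun x => ?_)
      show Real.exp (-(x - 2 * τ) ^ 2 / (4 * τ)) * g (y * Real.exp (x - τ)) = _
      rw [exp_shift hτ x]
      ring
    rw [heq]
    exact h2
  · -- the limit
    set L := sInf ((fun z => (g z : EReal)) '' Ioi 0) with hLdef
    have hT1 := tendsto_g_sInf hconv hg
    rw [← hLdef] at hT1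
    have hL0 : L ≤ 0 := by
      refine le_trans (sInf_le ⟨1, mem_Ioi.mpr one_pos, rfl⟩) ?_
      show (g 1 : EReal) ≤ ((0:ℝ) : EReal)
      exact_mod_cast g_nonpos hmono hconv hg one_pos
    refine ⟨L, hL0, hT1, ?_⟩
    by_cases hLb : L = ⊥
    · rw [hLb]
      rw [hLb] at hT1
      exact tendsto_v'_bot hC hq hτ hmono hconv hbdd hgrowth hg hT1
    · have hLt : L ≠ ⊤ := by
        intro hTop
        rw [hTop] at hL0
        simp at hL0
      have hcoe : ((L.toReal : ℝ) : EReal) = L := EReal.coe_toReal hLt hLb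
      have hlb : ∀ z > (0:ℝ), L.toReal ≤ g z := by
        intro z hz
        have h1 : L ≤ (g z : EReal) := sInf_le ⟨z, mem_Ioi.mpr hz, rfl⟩
        rw [← hcoe] at h1
        exact_mod_cast h1
      rw [← hcoe]
      rw [← hcoe] at hT1
      exact tendsto_v'_real hC hq hτ hmono hconv hbdd hgrowth hg hT1 hlb
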